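/- arXiv:1801.00186 — 3 statements merged into one kernel-verified Lean document; each statement's English description precedes it below -/
import Mathlib

section
/- Let j < k be nonnegative integers, let 1 ≤ p < ∞ be real, let μ be real, and set 1/p′ = 1 − 1/p. For each integer n large enough that all Gamma arguments below are positive, define ω_{j,k,p,μ}(n) = π^{(k−j)/(2p′)} · (Γ((n−j)/2)/Γ((n−k)/2))^{1/p} · Γ((μ + n/p − k + j/p′)/2) / Γ((μ + n/p − j/p)/2). Then lim_{n→∞} n^{(k−j)/(2p′)} · ω_{j,k,p,μ}(n) = (2π)^{(k−j)/(2p′)} · p^{(k−j)/2}. (Asymptotics, as n → ∞, of the norm of the (j,k)-transform R_{j,k} from L^p_μ(A_{n,j}) to L^p_ν(A_{n,k}).) -/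
open Real Filter

lemma gautschi_log {s : ℝ} (hs0 : 0 ≤ s) (hs1 : s ≤ 1) :
    Tendsto (fun x : ℝ => log (Gamma (x + s)) - log (Gamma x) - s * log x)
      atTop (nhds 0) := by
  have hlog : Tendsto (fun x : ℝ => -((1 - s) * (log (x + s) - log x))) atTop (nhds 0) := by
    have h1 : Tendsto (fun x : ℝ => 1 + s / x) atTop (nhds 1) := by
      simpa using tendsto_const_nhds.add
        (Tendsto.div_atTop (tendsto_const_nhds (x := s)) tendsto_id)
    have h2 : Tendsto (fun x : ℝ => log (1 + s / x)) atTop (nhds 0) := by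
      have := ((Real.continuousAt_log one_ne_zero).tendsto.comp h1); rwa [log_one] at this
    have h3 : Tendsto (fun x : ℝ => log (x + s) - log x) atTop (nhds 0) := by
      refine h2.congr' ?_
      filter_upwards [eventually_gt_atTop 0] with x hx
      rw [show 1 + s / x = (x + s) / x by field_simp, log_div (by linarith) (ne_of_gt hx)]
    simpa using (h3.const_mul (1 - s)).neg
  refine tendsto_of_tendsto_of_tendsto_of_le_of_le' hlog tendsto_const_nhds ?_ ?_
  · filter_upwards [eventually_gt_atTop 0] with x hx
    have hxs : (0:ℝ) < x + s := by linarith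
    have key := Real.convexOn_log_Gamma.2 (Set.mem_Ioi.2 hxs)
      (Set.mem_Ioi.2 (by linarith : (0:ℝ) < x + s + 1)) hs0
      (by linarith : (0:ℝ) ≤ 1 - s) (by ring)
    have hpt : s • (x + s) + (1 - s) • (x + s + 1) = x + 1 := by
      simp only [smul_eq_mul]; ring
    rw [hpt] at key
    simp only [Function.comp_apply, smul_eq_mul] at key
    have e1 : log (Gamma (x + s + 1)) = log (x + s) + log (Gamma (x + s)) := by
      rw [Real.Gamma_add_one (ne_of_gt hxs), log_mul (ne_of_gt hxs)
        (ne_of_gt (Real.Gamma_pos_of_pos hxs))]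
    have e2 : log (Gamma (x + 1)) = log x + log (Gamma x) := by
      rw [Real.Gamma_add_one (ne_of_gt hx), log_mul (ne_of_gt hx)
        (ne_of_gt (Real.Gamma_pos_of_pos hx))]
    rw [e1, e2] at key
    nlinarith [key]
  · filter_upwards [eventually_gt_atTop 0] with x hx
    have key := Real.convexOn_log_Gamma.2 (Set.mem_Ioi.2 hx)
      (Set.mem_Ioi.2 (by linarith : (0:ℝ) < x + 1))
      (by linarith : (0:ℝ) ≤ 1 - s) hs0 (by ring)
    have hpt : (1 - s) • x + s • (x + 1) = x + s := by
      simp only [smul_eq_mul]; ring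
    rw [hpt] at key
    simp only [Function.comp_apply, smul_eq_mul] at key
    have e2 : log (Gamma (x + 1)) = log x + log (Gamma x) := by
      rw [Real.Gamma_add_one (ne_of_gt hx), log_mul (ne_of_gt hx)
        (ne_of_gt (Real.Gamma_pos_of_pos hx))]
    rw [e2] at key
    nlinarith [key]

lemma gautschi_ratio {s : ℝ} (hs0 : 0 ≤ s) (hs1 : s ≤ 1) :
    Tendsto (fun x : ℝ => Gamma (x + s) / (Gamma x * x ^ s)) atTop (nhds 1) := by
  have h := (Real.continuous_exp.tendsto 0).comp (gautschi_log hs0 hs1)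
  rw [Real.exp_zero] at h
  refine h.congr' ?_
  filter_upwards [eventually_gt_atTop 0] with x hx
  have hxs : (0:ℝ) < x + s := by linarith
  simp only [Function.comp_apply]
  rw [Real.exp_sub, Real.exp_sub, Real.exp_log (Real.Gamma_pos_of_pos hxs),
    Real.exp_log (Real.Gamma_pos_of_pos hx), mul_comm s (log x),
    ← Real.rpow_def_of_pos hx, div_div]

lemma ratio_add_div (c : ℝ) : Tendsto (fun x : ℝ => (x + c) / x) atTop (nhds 1) := by
  have h1 : Tendsto (fun x : ℝ => 1 + c / x) atTop (nhds 1) := by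
    simpa using tendsto_const_nhds.add
      (Tendsto.div_atTop (tendsto_const_nhds (x := c)) tendsto_id)
  refine h1.congr' ?_
  filter_upwards [eventually_gt_atTop 0] with x hx
  field_simp

lemma gautschi_nat (m : ℕ) : ∀ s : ℝ, 0 ≤ s → s ≤ 1 →
    Tendsto (fun x : ℝ => Gamma (x + (s + m)) / (Gamma x * x ^ (s + (m:ℝ)))) atTop (nhds 1) := by
  induction m with
  | zero => intro s h0 h1; simpa using gautschi_ratio h0 h1
  | succ m ih =>
    intro s h0 h1
    have key := (ih s h0 h1).mul (ratio_add_div (s + m))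
    rw [mul_one] at key
    refine key.congr' ?_
    filter_upwards [eventually_gt_atTop 0] with x hx
    have hxs : (0:ℝ) < x + (s + m) := by positivity
    have e1 : x + (s + ((m:ℕ)+1:ℕ)) = (x + (s + m)) + 1 := by push_cast; ring
    have e2 : Gamma (x + (s + ((m:ℕ)+1:ℕ))) = (x + (s + m)) * Gamma (x + (s + m)) := by
      rw [e1, Real.Gamma_add_one (ne_of_gt hxs)]
    have e3 : x ^ (s + (((m:ℕ)+1:ℕ):ℝ)) = x ^ (s + (m:ℝ)) * x := by
      push_cast
      rw [show s + ((m:ℝ) + 1) = (s + m) + 1 by ring, Real.rpow_add hx, Real.rpow_one]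
    rw [e2, e3]
    field_simp

lemma gautschi_general {a : ℝ} (ha : 0 ≤ a) :
    Tendsto (fun x : ℝ => Gamma (x + a) / (Gamma x * x ^ a)) atTop (nhds 1) := by
  have h := gautschi_nat ⌊a⌋₊ (a - ⌊a⌋₊) (sub_nonneg.2 (Nat.floor_le ha))
    (by have := Nat.lt_floor_add_one a; linarith)
  simpa [sub_add_cancel] using h

/-- The pure algebraic identity used to regroup the sequence. -/
lemma alg_identity (p E a : ℝ) (hE : E = a - a * (1 / p)) (X Y N GX GXa GY GYa : ℝ)
    (hX : 0 < X) (hY : 0 < Y) (hN : 0 < N) (hGX : 0 < GX) (hGXa : 0 < GXa)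
    (hGY : 0 < GY) (hGYa : 0 < GYa) :
    N ^ E * (π ^ E * (GXa / GX) ^ (1 / p) * GY / GYa)
      = π ^ E * ((GXa / (GX * X ^ a)) ^ (1 / p) * (X / N) ^ (a * (1 / p)))
        * ((GYa / (GY * Y ^ a))⁻¹ * (N / Y) ^ a) := by
  have hXa : (0:ℝ) < X ^ a := rpow_pos_of_pos hX a
  have hYa : (0:ℝ) < Y ^ a := rpow_pos_of_pos hY a
  have hNa : (0:ℝ) < N ^ a := rpow_pos_of_pos hN a
  have hNaq : (0:ℝ) < N ^ (a * (1 / p)) := rpow_pos_of_pos hN _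
  have hGXq : (0:ℝ) < GX ^ (1 / p) := rpow_pos_of_pos hGX _
  have hGXaq : (0:ℝ) < GXa ^ (1 / p) := rpow_pos_of_pos hGXa _
  have hXaq : (0:ℝ) < X ^ (a * (1 / p)) := rpow_pos_of_pos hX _
  rw [Real.div_rpow hX.le hN.le, Real.div_rpow hN.le hY.le,
      Real.div_rpow hGXa.le hGX.le, Real.div_rpow hGXa.le (by positivity : (0:ℝ) ≤ GX * X ^ a),
      Real.mul_rpow hGX.le hXa.le, ← Real.rpow_mul hX.le,
      show N ^ E = N ^ a / N ^ (a * (1 / p)) by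
        rw [hE, Real.rpow_sub hN]]
  field_simp

/-- Asymptotics, as `n → ∞`, of the sharp constant `ω_{j,k,p,μ}(n)` (the norm of the
`(j,k)`-transform between weighted `L^p` spaces): here `1/p' = 1 - 1/p`, and
`n^{(k-j)/(2p')} ω_{j,k,p,μ}(n) → (2π)^{(k-j)/(2p')} p^{(k-j)/2}`. -/
theorem stmt3 (j k : ℕ) (hjk : j < k) (p : ℝ) (hp : 1 ≤ p) (μ : ℝ) :
    Filter.Tendsto
      (fun n : ℕ =>
        (n : ℝ) ^ (((k : ℝ) - j) * (1 - 1 / p) / 2) *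
          (Real.pi ^ (((k : ℝ) - j) * (1 - 1 / p) / 2) *
            (Real.Gamma (((n : ℝ) - j) / 2) / Real.Gamma (((n : ℝ) - k) / 2)) ^ (1 / p) *
            Real.Gamma ((μ + (n : ℝ) / p - k + j * (1 - 1 / p)) / 2) /
            Real.Gamma ((μ + (n : ℝ) / p - j / p) / 2)))
      Filter.atTop
      (nhds ((2 * Real.pi) ^ (((k : ℝ) - j) * (1 - 1 / p) / 2) * p ^ (((k : ℝ) - j) / 2))) := by
  have hp0 : (0:ℝ) < p := lt_of_lt_of_le one_pos hp
  have hjk' : (j:ℝ) < k := by exact_mod_cast hjk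
  set E : ℝ := ((k : ℝ) - j) * (1 - 1 / p) / 2 with hEdef
  set a : ℝ := ((k : ℝ) - j) / 2 with hadef
  have ha : (0:ℝ) < a := by rw [hadef]; linarith
  -- the auxiliary sequences
  have hxtop : Tendsto (fun n : ℕ => ((n:ℝ) - k) / 2) atTop atTop := by
    apply Tendsto.atTop_div_const two_pos
    have := tendsto_atTop_add_const_right atTop (-(k:ℝ)) tendsto_natCast_atTop_atTop
    simpa [sub_eq_add_neg] using this
  have hytop : Tendsto (fun n : ℕ => (μ + (n:ℝ) / p - k + j * (1 - 1 / p)) / 2) atTop atTop := by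
    apply Tendsto.atTop_div_const two_pos
    have h1 : Tendsto (fun n : ℕ => (n:ℝ) / p) atTop atTop :=
      Tendsto.atTop_div_const hp0 tendsto_natCast_atTop_atTop
    have h2 := tendsto_atTop_add_const_right atTop (μ - k + j * (1 - 1 / p)) h1
    refine h2.congr fun n => by ring
  have hR1 : Tendsto (fun n : ℕ =>
      Gamma (((n:ℝ) - k) / 2 + a) / (Gamma (((n:ℝ) - k) / 2) * (((n:ℝ) - k) / 2) ^ a))
      atTop (nhds 1) := (gautschi_general ha.le).comp hxtop
  have hR2 : Tendsto (fun n : ℕ =>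
      Gamma ((μ + (n:ℝ) / p - k + j * (1 - 1 / p)) / 2 + a) /
        (Gamma ((μ + (n:ℝ) / p - k + j * (1 - 1 / p)) / 2) *
          ((μ + (n:ℝ) / p - k + j * (1 - 1 / p)) / 2) ^ a))
      atTop (nhds 1) := (gautschi_general ha.le).comp hytop
  have T1 : Tendsto (fun n : ℕ =>
      (Gamma (((n:ℝ) - k) / 2 + a) / (Gamma (((n:ℝ) - k) / 2) * (((n:ℝ) - k) / 2) ^ a)) ^ (1 / p))
      atTop (nhds 1) := by
    simpa using hR1.rpow_const (Or.inl one_ne_zero)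
  have T3 : Tendsto (fun n : ℕ =>
      (Gamma ((μ + (n:ℝ) / p - k + j * (1 - 1 / p)) / 2 + a) /
        (Gamma ((μ + (n:ℝ) / p - k + j * (1 - 1 / p)) / 2) *
          ((μ + (n:ℝ) / p - k + j * (1 - 1 / p)) / 2) ^ a))⁻¹)
      atTop (nhds 1) := by
    simpa using hR2.inv₀ one_ne_zero
  have Thalf : Tendsto (fun n : ℕ => (((n:ℝ) - k) / 2) / n) atTop (nhds (1 / 2)) := by
    have h0 : Tendsto (fun n : ℕ => 1 / 2 - ((k:ℝ) / 2) / n) atTop (nhds (1 / 2 - 0)) :=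
      tendsto_const_nhds.sub (tendsto_const_div_atTop_nhds_zero_nat _)
    rw [sub_zero] at h0
    refine h0.congr' ?_
    filter_upwards [eventually_gt_atTop 0] with n hn
    have hn' : (n:ℝ) ≠ 0 := Nat.cast_ne_zero.2 hn.ne'
    field_simp
  have T2 : Tendsto (fun n : ℕ => ((((n:ℝ) - k) / 2) / n) ^ (a * (1 / p))) atTop
      (nhds ((1 / 2 : ℝ) ^ (a * (1 / p)))) :=
    Thalf.rpow_const (Or.inl (by norm_num))
  have Ty : Tendsto (fun n : ℕ => ((μ + (n:ℝ) / p - k + j * (1 - 1 / p)) / 2) / n)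
      atTop (nhds (1 / (2 * p))) := by
    have h0 : Tendsto (fun n : ℕ => 1 / (2 * p) + ((μ - k + j * (1 - 1 / p)) / 2) / n)
        atTop (nhds (1 / (2 * p) + 0)) :=
      tendsto_const_nhds.add (tendsto_const_div_atTop_nhds_zero_nat _)
    rw [add_zero] at h0
    refine h0.congr' ?_
    filter_upwards [eventually_gt_atTop 0] with n hn
    have hn' : (n:ℝ) ≠ 0 := Nat.cast_ne_zero.2 hn.ne'
    field_simp
    ring
  have Tinv : Tendsto (fun n : ℕ => (n:ℝ) / ((μ + (n:ℝ) / p - k + j * (1 - 1 / p)) / 2))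
      atTop (nhds (2 * p)) := by
    have h0 := Ty.inv₀ (by positivity : (1 / (2 * p) : ℝ) ≠ 0)
    rw [show ((1:ℝ) / (2 * p))⁻¹ = 2 * p from by field_simp] at h0
    refine h0.congr' ?_
    filter_upwards [hytop.eventually_gt_atTop 0, eventually_gt_atTop 0] with n hy hn
    rw [inv_div]
  have T4 : Tendsto (fun n : ℕ =>
      ((n:ℝ) / ((μ + (n:ℝ) / p - k + j * (1 - 1 / p)) / 2)) ^ a) atTop
      (nhds ((2 * p) ^ a)) :=
    Tinv.rpow_const (Or.inl (by positivity))
  -- combine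
  have TG := (tendsto_const_nhds (x := (π : ℝ) ^ E)).mul (T1.mul T2) |>.mul (T3.mul T4)
  have hval : π ^ E * (1 * (1 / 2 : ℝ) ^ (a * (1 / p))) * (1 * (2 * p) ^ a)
      = (2 * π) ^ E * p ^ a := by
    rw [one_mul, one_mul, Real.mul_rpow (by norm_num : (0:ℝ) ≤ 2) pi_pos.le,
      Real.mul_rpow (by norm_num : (0:ℝ) ≤ 2) hp0.le,
      show ((1:ℝ)/2) ^ (a * (1/p)) = (2:ℝ) ^ (-(a * (1/p))) by
        rw [Real.rpow_neg (by norm_num), ← Real.inv_rpow (by norm_num)]; norm_num]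
    have h2 : (2:ℝ) ^ (-(a * (1 / p))) * ((2:ℝ) ^ a) = (2:ℝ) ^ E := by
      rw [← Real.rpow_add two_pos]
      congr 1
      rw [hEdef, hadef]; ring
    calc π ^ E * (2:ℝ) ^ (-(a * (1/p))) * ((2:ℝ) ^ a * p ^ a)
        = ((2:ℝ) ^ (-(a * (1/p))) * (2:ℝ) ^ a) * (π ^ E * p ^ a) := by ring
      _ = (2:ℝ) ^ E * π ^ E * p ^ a := by rw [h2]; ring
  rw [← hval]
  refine Tendsto.congr' ?_ TG
  filter_upwards [eventually_gt_atTop k, hytop.eventually_gt_atTop 0,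
    eventually_gt_atTop 0] with n hnk hyn hn0
  have hkn : (k:ℝ) < n := Nat.cast_lt.2 hnk
  have hn' : (0:ℝ) < n := Nat.cast_pos.2 hn0
  have hX : (0:ℝ) < ((n:ℝ) - k) / 2 := by linarith
  have e1 : ((n:ℝ) - j) / 2 = ((n:ℝ) - k) / 2 + a := by rw [hadef]; ring
  have e2 : (μ + (n:ℝ) / p - j / p) / 2 = (μ + (n:ℝ) / p - k + j * (1 - 1 / p)) / 2 + a := by
    rw [hadef]; ring
  have hE' : E = a - a * (1 / p) := by rw [hEdef, hadef]; ring
  have halg := alg_identity p E a hE' (((n:ℝ) - k) / 2)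
    ((μ + (n:ℝ) / p - k + j * (1 - 1 / p)) / 2) (n:ℝ)
    (Gamma (((n:ℝ) - k) / 2)) (Gamma (((n:ℝ) - k) / 2 + a))
    (Gamma ((μ + (n:ℝ) / p - k + j * (1 - 1 / p)) / 2))
    (Gamma ((μ + (n:ℝ) / p - k + j * (1 - 1 / p)) / 2 + a))
    hX hyn hn' (Real.Gamma_pos_of_pos hX) (Real.Gamma_pos_of_pos (by linarith))
    (Real.Gamma_pos_of_pos hyn) (Real.Gamma_pos_of_pos (by linarith))
  rw [e1, e2]
  exact halg.symm
end

section
/- Let 1 ≤ p < ∞ and 1 ≤ q < ∞ be real, and suppose there exists a constant c ∈ (0,∞) such that for every measurable f : ℝ^n → [0,∞] one has ( ∫_{S^{n-1}} ∫_ℝ (Rf(θ,t))^q dt d*θ )^{1/q} ≤ c · ( ∫_{ℝ^n} f(x)^p dx )^{1/p}. Then necessarily 1/q = n/p − (n−1). (Necessity, via the scaling argument, of the exponent relation 1/q = ((n−j)/(n−k))(1/p) − (k−j)/(n−k) for L^p–L^q boundedness of the (j,k)-transform, in the case j = 0, k = n−1.) -/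
open MeasureTheory Metric Real
open scoped ENNReal NNReal

noncomputable section

/-- Scaling for lintegrals against an add-Haar measure on a finite-dimensional real normed
space, without measurability assumptions. -/
lemma aux_lintegral_smul {F : Type*} [NormedAddCommGroup F] [NormedSpace ℝ F]
    [MeasurableSpace F] [BorelSpace F] [FiniteDimensional ℝ F]
    (μ : Measure F) [μ.IsAddHaarMeasure] (g : F → ℝ≥0∞) {r : ℝ} (hr : r ≠ 0) :
    ∫⁻ x, g (r • x) ∂μ = ENNReal.ofReal |(r ^ Module.finrank ℝ F)⁻¹| * ∫⁻ x, g x ∂μ := by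
  let e : F ≃ᵐ F := (Homeomorph.smul (isUnit_iff_ne_zero.2 hr).unit (α := F)).toMeasurableEquiv
  have hce : (e : F → F) = (r • ·) := by
    funext x
    simp [e, Units.smul_def]
  have h1 : ∫⁻ y, g y ∂(Measure.map (r • ·) μ) = ∫⁻ x, g (r • x) ∂μ := by
    rw [← hce, lintegral_map_equiv g e, hce]
  rw [← h1, Measure.map_addHaar_smul μ hr, lintegral_smul_measure, smul_eq_mul]

/-- The volume of a closed ball in a finite-dim inner product space only depends on dimension. -/
lemma aux_volume_closedBall {F : Type*} [NormedAddCommGroup F] [InnerProductSpace ℝ F]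
    [MeasurableSpace F] [BorelSpace F] [FiniteDimensional ℝ F] (R : ℝ) :
    volume (closedBall (0 : F) R)
      = volume (closedBall (0 : EuclideanSpace ℝ (Fin (Module.finrank ℝ F))) R) := by
  let e := (stdOrthonormalBasis ℝ F).repr
  have h := e.measurePreserving.measure_preimage (μa := volume) (μb := volume)
    (s := closedBall 0 R) measurableSet_closedBall.nullMeasurableSet
  have hpre : (e : F → _) ⁻¹' closedBall 0 R = closedBall 0 R := by
    have := e.toIsometryEquiv.preimage_closedBall 0 R
    simpa using this
  rw [← h, hpre]


/-- The normalized (probability) surface measure `d*θ` on the unit sphere of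
`EuclideanSpace ℝ (Fin n)`. -/
def sphMeasure (n : ℕ) : Measure (sphere (0 : EuclideanSpace ℝ (Fin n)) 1) :=
  ((volume : Measure (EuclideanSpace ℝ (Fin n))).toSphere Set.univ)⁻¹ •
    (volume : Measure (EuclideanSpace ℝ (Fin n))).toSphere

/-- The hyperplane Radon transform: `Rf(θ,t) = ∫_{θ^⊥} f(tθ + y) dy`, where `θ^⊥` carries its
canonical Lebesgue measure as an (n-1)-dimensional inner product space. -/
def Radon (n : ℕ) (f : EuclideanSpace ℝ (Fin n) → ℝ≥0∞)
    (θ : sphere (0 : EuclideanSpace ℝ (Fin n)) 1) (t : ℝ) : ℝ≥0∞ :=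
  ∫⁻ y : ((ℝ ∙ (θ : EuclideanSpace ℝ (Fin n)))ᗮ),
    f (t • (θ : EuclideanSpace ℝ (Fin n)) + (y : EuclideanSpace ℝ (Fin n)))

/-- Necessity of the exponent relation `1/q = n/p - (n-1)` for an `L^p → L^q` estimate for the
hyperplane Radon transform (scaling argument, case `j = 0`, `k = n-1`). -/
theorem stmt4 (n : ℕ) (hn : 2 ≤ n) (p q : ℝ) (hp : 1 ≤ p) (hq : 1 ≤ q)
    (h : ∃ c : ℝ, 0 < c ∧ ∀ f : EuclideanSpace ℝ (Fin n) → ℝ≥0∞, Measurable f →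
      (∫⁻ θ, ∫⁻ t : ℝ, Radon n f θ t ^ q ∂volume ∂(sphMeasure n)) ^ (1 / q) ≤
        ENNReal.ofReal c * (∫⁻ x, f x ^ p) ^ (1 / p)) :
    1 / q = (n : ℝ) / p - ((n : ℝ) - 1) := by
  classical
  obtain ⟨c, hc, H⟩ := h
  have hp0 : 0 < p := lt_of_lt_of_le one_pos hp
  have hq0 : 0 < q := lt_of_lt_of_le one_pos hq
  set E := EuclideanSpace ℝ (Fin n) with hE
  have hfinE : Module.finrank ℝ E = n := finrank_euclideanSpace_fin
  haveI hfact : Fact (Module.finrank ℝ E = (n - 1) + 1) := ⟨by omega⟩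
  set f : E → ℝ≥0∞ := (closedBall (0 : E) 1).indicator (fun _ => 1) with hf
  have hfm : Measurable f := measurable_const.indicator measurableSet_closedBall
  set B : ℝ≥0∞ := volume (closedBall (0 : E) 1) with hB
  set A : ℝ≥0∞ := ∫⁻ θ, ∫⁻ t : ℝ, Radon n f θ t ^ q ∂volume ∂(sphMeasure n) with hA
  have hθne : ∀ θ : sphere (0 : E) 1, (θ : E) ≠ 0 := fun θ => ne_zero_of_mem_unit_sphere θ
  have hrank : ∀ θ : sphere (0 : E) 1, Module.finrank ℝ ((ℝ ∙ (θ : E))ᗮ) = n - 1 := fun θ =>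
    Submodule.finrank_orthogonal_span_singleton (hθne θ)
  -- scaling of the Radon transform
  have hradon : ∀ r : ℝ, 0 < r → ∀ θ : sphere (0 : E) 1, ∀ t : ℝ,
      Radon n (fun x => f (r⁻¹ • x)) θ t
        = ENNReal.ofReal (r ^ (n - 1)) * Radon n f θ (r⁻¹ * t) := by
    intro r hr θ t
    have h1 : Radon n (fun x => f (r⁻¹ • x)) θ t
        = ∫⁻ y : ((ℝ ∙ (θ : E))ᗮ),
            (fun z : ((ℝ ∙ (θ : E))ᗮ) => f ((r⁻¹ * t) • (θ : E) + (z : E))) (r⁻¹ • y) := by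
      refine lintegral_congr fun y => ?_
      simp only [Submodule.coe_smul]
      rw [smul_add, smul_smul]
    rw [h1, aux_lintegral_smul volume
      (fun z : ((ℝ ∙ (θ : E))ᗮ) => f ((r⁻¹ * t) • (θ : E) + (z : E))) (inv_ne_zero hr.ne')]
    congr 1
    rw [hrank θ, inv_pow, inv_inv, abs_of_pos (pow_pos hr _)]
  -- scaling of the t-integral
  have ht : ∀ r : ℝ, 0 < r → ∀ θ : sphere (0 : E) 1,
      (∫⁻ t : ℝ, Radon n (fun x => f (r⁻¹ • x)) θ t ^ q)
        = ENNReal.ofReal (r ^ (n - 1)) ^ q *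
            (ENNReal.ofReal r * ∫⁻ t : ℝ, Radon n f θ t ^ q) := by
    intro r hr θ
    have h1 : (∫⁻ t : ℝ, Radon n (fun x => f (r⁻¹ • x)) θ t ^ q)
        = ∫⁻ t : ℝ, ENNReal.ofReal (r ^ (n - 1)) ^ q * Radon n f θ (r⁻¹ * t) ^ q := by
      refine lintegral_congr fun t => ?_
      rw [hradon r hr θ t, ENNReal.mul_rpow_of_nonneg _ _ hq0.le]
    rw [h1, lintegral_const_mul' _ _ (ENNReal.rpow_ne_top_of_nonneg hq0.le ENNReal.ofReal_ne_top)]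
    congr 1
    have h2 : (∫⁻ t : ℝ, Radon n f θ (r⁻¹ * t) ^ q)
        = ∫⁻ t : ℝ, (fun s : ℝ => Radon n f θ s ^ q) (r⁻¹ • t) := by
      refine lintegral_congr fun t => ?_
      simp [smul_eq_mul]
    rw [h2, aux_lintegral_smul (volume : Measure ℝ)
      (fun s : ℝ => Radon n f θ s ^ q) (inv_ne_zero hr.ne')]
    congr 1
    rw [Module.finrank_self, pow_one, inv_inv, abs_of_pos hr]
  -- scaling of the full LHS
  have hLHS : ∀ r : ℝ, 0 < r →
      (∫⁻ θ, ∫⁻ t : ℝ, Radon n (fun x => f (r⁻¹ • x)) θ t ^ q ∂volume ∂(sphMeasure n))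
        = ENNReal.ofReal (r ^ (n - 1)) ^ q * (ENNReal.ofReal r * A) := by
    intro r hr
    rw [lintegral_congr (ht r hr)]
    rw [lintegral_const_mul' _ _ (ENNReal.rpow_ne_top_of_nonneg hq0.le ENNReal.ofReal_ne_top),
      lintegral_const_mul' _ _ ENNReal.ofReal_ne_top]
  -- scaling of the RHS
  have hfp : ∀ x : E, f x ^ p = f x := by
    intro x
    by_cases hx : x ∈ closedBall (0 : E) 1 <;>
      simp [hf, Set.indicator_apply, hx, ENNReal.zero_rpow_of_pos hp0]
  have hRHS : ∀ r : ℝ, 0 < r →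
      (∫⁻ x : E, f (r⁻¹ • x) ^ p) = ENNReal.ofReal (r ^ n) * B := by
    intro r hr
    have h1 : (∫⁻ x : E, f (r⁻¹ • x) ^ p) = ∫⁻ x : E, f (r⁻¹ • x) :=
      lintegral_congr fun x => hfp _
    rw [h1, aux_lintegral_smul (volume : Measure E) f (inv_ne_zero hr.ne')]
    rw [hf, lintegral_indicator_const measurableSet_closedBall (1 : ℝ≥0∞), one_mul]
    congr 1
    rw [hfinE, inv_pow, inv_inv, abs_of_pos (pow_pos hr _)]
  -- the key inequality
  have key : ∀ r : ℝ, 0 < r →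
      ENNReal.ofReal r ^ ((n : ℝ) - 1 + 1 / q) * A ^ (1 / q) ≤
        ENNReal.ofReal r ^ ((n : ℝ) / p) * (ENNReal.ofReal c * B ^ (1 / p)) := by
    intro r hr
    have hHr := H (fun x => f (r⁻¹ • x)) (hfm.comp (measurable_const_smul r⁻¹))
    rw [hLHS r hr, hRHS r hr] at hHr
    set u : ℝ≥0∞ := ENNReal.ofReal r with hu
    have hu0 : u ≠ 0 := (ENNReal.ofReal_pos.2 hr).ne'
    have hut : u ≠ ⊤ := ENNReal.ofReal_ne_top
    have hcast : ((n - 1 : ℕ) : ℝ) = (n : ℝ) - 1 := by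
      push_cast [Nat.cast_sub (by omega : 1 ≤ n)]; ring
    have e1 : ENNReal.ofReal (r ^ (n - 1)) = u ^ ((n : ℝ) - 1) := by
      rw [ENNReal.ofReal_pow hr.le, ← hcast, ENNReal.rpow_natCast]
    have e2 : ENNReal.ofReal (r ^ n) = u ^ (n : ℝ) := by
      rw [ENNReal.ofReal_pow hr.le, ENNReal.rpow_natCast]
    rw [e1, e2] at hHr
    have e3 : (u ^ ((n : ℝ) - 1)) ^ q * (u * A) = u ^ (((n : ℝ) - 1) * q + 1) * A := by
      rw [ENNReal.rpow_add _ _ hu0 hut, ENNReal.rpow_one, ← ENNReal.rpow_mul, mul_assoc]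
    rw [e3, ENNReal.mul_rpow_of_nonneg _ _ (by positivity : (0:ℝ) ≤ 1 / q),
      ENNReal.mul_rpow_of_nonneg _ _ (by positivity : (0:ℝ) ≤ 1 / p),
      ← ENNReal.rpow_mul, ← ENNReal.rpow_mul] at hHr
    have e4 : (((n : ℝ) - 1) * q + 1) * (1 / q) = (n : ℝ) - 1 + 1 / q := by
      field_simp
    have e5 : (n : ℝ) * (1 / p) = (n : ℝ) / p := by ring
    rw [e4, e5] at hHr
    calc ENNReal.ofReal r ^ ((n : ℝ) - 1 + 1 / q) * A ^ (1 / q)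
        ≤ ENNReal.ofReal c * (u ^ ((n : ℝ) / p) * B ^ (1 / p)) := hHr
      _ = u ^ ((n : ℝ) / p) * (ENNReal.ofReal c * B ^ (1 / p)) := by ring
  -- positivity of A
  have hA0 : A ≠ 0 := by
    set v : ℝ≥0∞ := volume (closedBall (0 : EuclideanSpace ℝ (Fin (n - 1))) 2⁻¹) with hv
    have hv0 : 0 < v := measure_closedBall_pos _ _ (by norm_num)
    have hvt : v ≠ ⊤ := measure_closedBall_lt_top.ne
    have hlow : ∀ θ : sphere (0 : E) 1, ∀ t : ℝ, t ∈ Set.Icc (-(2⁻¹ : ℝ)) 2⁻¹ →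
        v ≤ Radon n f θ t := by
      intro θ t htt
      have hsub : ∀ y : ((ℝ ∙ (θ : E))ᗮ), y ∈ closedBall (0 : ((ℝ ∙ (θ : E))ᗮ)) 2⁻¹ →
          f (t • (θ : E) + (y : E)) = 1 := by
        intro y hy
        have hyn : ‖(y : E)‖ ≤ 2⁻¹ := by
          have h' := mem_closedBall_zero_iff.1 hy
          simpa using h'
        have hinner : (inner ℝ (t • (θ : E)) ((y : E)) : ℝ) = 0 := by
          have hmem := y.2
          rw [Submodule.mem_orthogonal] at hmem
          exact hmem _ (Submodule.smul_mem _ t (Submodule.mem_span_singleton_self _))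
        have hnorm : ‖t • (θ : E) + (y : E)‖ ≤ 1 := by
          have hsq : ‖t • (θ : E) + (y : E)‖ ^ 2 = ‖t • (θ : E)‖ ^ 2 + ‖(y : E)‖ ^ 2 := by
            rw [norm_add_sq_real, hinner]; ring
          have h1 : ‖t • (θ : E)‖ = |t| := by
            rw [norm_smul, norm_eq_of_mem_sphere θ, Real.norm_eq_abs, mul_one]
          have h2 : |t| ≤ 2⁻¹ := abs_le.2 ⟨htt.1, htt.2⟩
          nlinarith [norm_nonneg (t • (θ : E) + (y : E)), abs_nonneg t,
            norm_nonneg ((y : E))]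
        simp [hf, Set.indicator_of_mem (mem_closedBall_zero_iff.2 hnorm)]
      have hb : volume (closedBall (0 : ((ℝ ∙ (θ : E))ᗮ)) 2⁻¹) = v := by
        have h' := aux_volume_closedBall (F := ((ℝ ∙ (θ : E))ᗮ)) 2⁻¹
        rw [hrank θ] at h'
        exact h'
      calc v = ∫⁻ y : ((ℝ ∙ (θ : E))ᗮ),
              (closedBall (0 : ((ℝ ∙ (θ : E))ᗮ)) 2⁻¹).indicator (fun _ => (1 : ℝ≥0∞)) y := by
            rw [lintegral_indicator_const measurableSet_closedBall, one_mul, hb]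
        _ ≤ Radon n f θ t := by
            refine lintegral_mono fun y => ?_
            by_cases hy : y ∈ closedBall (0 : ((ℝ ∙ (θ : E))ᗮ)) 2⁻¹
            · rw [Set.indicator_of_mem hy, hsub y hy]
            · simp [Set.indicator_of_notMem hy]
    have hsph : (sphMeasure n) Set.univ = 1 := by
      rw [sphMeasure, Measure.smul_apply, smul_eq_mul]
      refine ENNReal.inv_mul_cancel ?_ (measure_ne_top _ _)
      rw [Measure.toSphere_apply_univ]
      refine mul_ne_zero ?_ (measure_ball_pos _ _ one_pos).ne'
      simp only [ne_eq, Nat.cast_eq_zero]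
      rw [hfinE]
      omega
    have hinner_bound : ∀ θ : sphere (0 : E) 1, v ^ q ≤ ∫⁻ t : ℝ, Radon n f θ t ^ q := by
      intro θ
      calc v ^ q
          = ∫⁻ t : ℝ, (Set.Icc (-(2⁻¹ : ℝ)) 2⁻¹).indicator (fun _ => v ^ q) t := by
            rw [lintegral_indicator_const measurableSet_Icc, Real.volume_Icc]
            norm_num
        _ ≤ ∫⁻ t : ℝ, Radon n f θ t ^ q := by
            refine lintegral_mono fun t => ?_
            by_cases htt : t ∈ Set.Icc (-(2⁻¹ : ℝ)) 2⁻¹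
            · rw [Set.indicator_of_mem htt]
              exact ENNReal.rpow_le_rpow (hlow θ t htt) hq0.le
            · simp [Set.indicator_of_notMem htt]
    have hvq : (0 : ℝ≥0∞) < v ^ q := ENNReal.rpow_pos hv0 hvt
    intro hAz
    have : v ^ q ≤ A := by
      calc v ^ q = ∫⁻ _ : sphere (0 : E) 1, v ^ q ∂(sphMeasure n) := by
            rw [lintegral_const, hsph, mul_one]
        _ ≤ A := lintegral_mono hinner_bound
    rw [hAz] at this
    exact hvq.ne' (le_antisymm this (by positivity))
  -- finiteness of the RHS constant
  have hK : ENNReal.ofReal c * B ^ (1 / p) ≠ ⊤ :=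
    ENNReal.mul_ne_top ENNReal.ofReal_ne_top
      (ENNReal.rpow_ne_top_of_nonneg (by positivity : (0:ℝ) ≤ 1 / p) measure_closedBall_lt_top.ne)
  -- conclusion by the scaling argument
  set α : ℝ := (n : ℝ) - 1 + 1 / q with hα
  set β : ℝ := (n : ℝ) / p with hβ
  set A' : ℝ≥0∞ := A ^ (1 / q) with hA'
  set K : ℝ≥0∞ := ENNReal.ofReal c * B ^ (1 / p) with hK'
  have hA'0 : A' ≠ 0 := by
    intro hz
    rw [hA', ENNReal.rpow_eq_zero_iff] at hz
    rcases hz with ⟨h1, _⟩ | ⟨_, h2⟩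
    · exact hA0 h1
    · linarith [one_div_pos.2 hq0]
  by_contra hne
  have hαβ : α ≠ β := by
    intro hab
    apply hne
    rw [hα, hβ] at hab
    linarith
  have hsub : α - β ≠ 0 := sub_ne_zero.2 hαβ
  have hall : ∀ d : ℝ, ENNReal.ofReal (exp d) * A' ≤ K := by
    intro d
    set s : ℝ := d / (α - β) with hs
    have hr : (0 : ℝ) < exp s := exp_pos s
    have hkey := key (exp s) hr
    set u : ℝ≥0∞ := ENNReal.ofReal (exp s) with hu
    have hu0 : u ≠ 0 := (ENNReal.ofReal_pos.2 hr).ne'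
    have hut : u ≠ ⊤ := ENNReal.ofReal_ne_top
    have huβ0 : u ^ β ≠ 0 := by
      simp [ENNReal.rpow_eq_zero_iff, hu0, hut]
    have huβt : u ^ β ≠ ⊤ := by
      simp [ENNReal.rpow_eq_top_iff, hu0, hut]
    have h2 : u ^ β * (u ^ (α - β) * A') ≤ u ^ β * K := by
      rw [← mul_assoc, ← ENNReal.rpow_add _ _ hu0 hut]
      have : β + (α - β) = α := by ring
      rw [this]
      exact hkey
    have h3 : u ^ (α - β) * A' ≤ K := (ENNReal.mul_le_mul_iff_right huβ0 huβt).1 h2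
    have h4 : u ^ (α - β) = ENNReal.ofReal (exp d) := by
      rw [hu, ENNReal.ofReal_rpow_of_pos hr, Real.rpow_def_of_pos hr, Real.log_exp, hs,
        div_mul_cancel₀ _ hsub]
    rwa [h4] at h3
  -- now derive a contradiction
  have hAt : A' ≠ ⊤ := by
    intro hAt
    have := hall 0
    rw [hAt] at this
    simp only [exp_zero, ENNReal.ofReal_one, one_mul] at this
    exact hK (top_le_iff.1 this)
  have hAtr : 0 < A'.toReal := ENNReal.toReal_pos hA'0 hAt
  have hd := hall (log ((K.toReal + 1) / A'.toReal))
  have hKtr : (0 : ℝ) ≤ K.toReal := ENNReal.toReal_nonneg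
  have hpos : (0 : ℝ) < (K.toReal + 1) / A'.toReal := by positivity
  rw [exp_log hpos] at hd
  have hmul : ENNReal.ofReal ((K.toReal + 1) / A'.toReal) * A' = K + 1 := by
    calc ENNReal.ofReal ((K.toReal + 1) / A'.toReal) * A'
        = ENNReal.ofReal ((K.toReal + 1) / A'.toReal) * ENNReal.ofReal A'.toReal := by
          rw [ENNReal.ofReal_toReal hAt]
      _ = ENNReal.ofReal ((K.toReal + 1) / A'.toReal * A'.toReal) := by
          rw [ENNReal.ofReal_mul hpos.le]
      _ = ENNReal.ofReal (K.toReal + 1) := by rw [div_mul_cancel₀ _ hAtr.ne']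
      _ = K + 1 := by
          rw [ENNReal.ofReal_add hKtr zero_le_one, ENNReal.ofReal_toReal hK, ENNReal.ofReal_one]
  rw [hmul] at hd
  exact absurd hd (not_le.2 (ENNReal.lt_add_right hK one_ne_zero))
end
end

section
/- Let f₀(x) = (1 + |x|²)^{−n/2} for x ∈ ℝ^n, and set Ω = ( σ_{n-1}^n / (2 σ_n^{n−1}) )^{1/(n+1)}. Then ( ∫_{S^{n-1}} ∫_ℝ (Rf₀(θ,t))^{n+1} dt d*θ )^{1/(n+1)} = Ω · ( ∫_{ℝ^n} f₀(x)^{(n+1)/n} dx )^{n/(n+1)}, both sides being finite and positive. (Case j = 0, k = n−1 of the paper's Lemma showing that f₀ realizes equality in the conjectured sharp L^p–L^q estimate for the (j,k)-transform.) -/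
open MeasureTheory Metric Real
open scoped ENNReal NNReal

noncomputable section

/-- `σ_m = 2π^{(m+1)/2}/Γ((m+1)/2)`, the surface area of the unit sphere `S^m`. -/
def sphereArea (m : ℕ) : ℝ :=
  2 * Real.pi ^ (((m : ℝ) + 1) / 2) / Real.Gamma (((m : ℝ) + 1) / 2)

section Aux

open Set

variable {F : Type*} [NormedAddCommGroup F] [InnerProductSpace ℝ F]
  [FiniteDimensional ℝ F] [MeasurableSpace F] [BorelSpace F]

lemma lintA {b : ℝ} (hb : 0 < b) :
    ∫⁻ v : F, ENNReal.ofReal (rexp (-b * ‖v‖ ^ 2)) =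
      ENNReal.ofReal ((π / b) ^ ((Module.finrank ℝ F : ℝ) / 2)) := by
  rw [← GaussianFourier.integral_rexp_neg_mul_sq_norm hb]
  rw [MeasureTheory.ofReal_integral_eq_lintegral_ofReal]
  · have : Integrable (fun v : F => Complex.exp (-(b:ℂ) * ‖v‖ ^ 2 + 0 * (inner ℝ (0:F) v : ℝ))) :=
      GaussianFourier.integrable_cexp_neg_mul_sq_norm_add (by simpa using hb) 0 0
    have h := this.re
    refine h.congr (Filter.Eventually.of_forall fun v => ?_)
    simp only [mul_zero, zero_mul, add_zero, neg_mul, ← Complex.ofReal_pow,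
      ← Complex.ofReal_mul, ← Complex.ofReal_neg, ← Complex.ofReal_exp, Complex.ofReal_re,
      RCLike.re_to_complex]
  · exact Filter.Eventually.of_forall fun v => (Real.exp_pos _).le

lemma lintB {a r : ℝ} (ha : 0 < a) (hr : 0 < r) :
    ∫⁻ t in Ioi (0:ℝ), ENNReal.ofReal (t ^ (a - 1) * rexp (-(r * t))) =
      ENNReal.ofReal ((1 / r) ^ a * Real.Gamma a) := by
  rw [← Real.integral_rpow_mul_exp_neg_mul_Ioi ha hr]
  rw [MeasureTheory.ofReal_integral_eq_lintegral_ofReal]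
  · have h0 : IntegrableOn (fun t : ℝ => t ^ (a - 1) * rexp (-r * t ^ (1:ℝ))) (Ioi 0) :=
      integrableOn_rpow_mul_exp_neg_mul_rpow (by linarith) one_pos hr
    refine h0.congr_fun (fun t ht => ?_) measurableSet_Ioi
    dsimp only
    rw [Real.rpow_one, neg_mul]
  · filter_upwards [ae_restrict_mem measurableSet_Ioi] with t ht
    have : (0:ℝ) < t := ht
    positivity

lemma lintC {s : ℝ} (hs : (Module.finrank ℝ F : ℝ) < 2 * s) :
    ∫⁻ v : F, ENNReal.ofReal ((1 + ‖v‖ ^ 2) ^ (-s)) =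
      ENNReal.ofReal (π ^ ((Module.finrank ℝ F : ℝ) / 2) *
        Real.Gamma (s - (Module.finrank ℝ F : ℝ) / 2) / Real.Gamma s) := by
  set m : ℝ := (Module.finrank ℝ F : ℝ) with hm
  have hm0 : 0 ≤ m := Nat.cast_nonneg _
  have hs0 : 0 < s := by linarith
  have hsm : 0 < s - m / 2 := by linarith
  have hΓs : 0 < Real.Gamma s := Real.Gamma_pos_of_pos hs0
  have hΓne : ENNReal.ofReal (Real.Gamma s) ≠ 0 := by
    simp [ENNReal.ofReal_eq_zero, not_le, hΓs]
  have hΓtop : ENNReal.ofReal (Real.Gamma s) ≠ ⊤ := ENNReal.ofReal_ne_top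
  have step : ∀ v : F, ENNReal.ofReal ((1 + ‖v‖ ^ 2) ^ (-s)) =
      (ENNReal.ofReal (Real.Gamma s))⁻¹ *
        ∫⁻ t in Ioi (0:ℝ), ENNReal.ofReal (t ^ (s - 1) * rexp (-((1 + ‖v‖ ^ 2) * t))) := by
    intro v
    have hr : (0:ℝ) < 1 + ‖v‖ ^ 2 := by positivity
    rw [lintB hs0 hr, ENNReal.ofReal_mul (by positivity), ← mul_assoc,
      mul_comm (ENNReal.ofReal (Real.Gamma s))⁻¹, mul_assoc,
      mul_comm (ENNReal.ofReal (Real.Gamma s))⁻¹, ENNReal.mul_inv_cancel hΓne hΓtop, mul_one,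
      one_div, Real.inv_rpow hr.le, ← Real.rpow_neg hr.le]
  calc ∫⁻ v : F, ENNReal.ofReal ((1 + ‖v‖ ^ 2) ^ (-s))
      = ∫⁻ v : F, (ENNReal.ofReal (Real.Gamma s))⁻¹ *
          ∫⁻ t in Ioi (0:ℝ), ENNReal.ofReal (t ^ (s - 1) * rexp (-((1 + ‖v‖ ^ 2) * t))) :=
        lintegral_congr step
    _ = (ENNReal.ofReal (Real.Gamma s))⁻¹ * ∫⁻ v : F,
          ∫⁻ t in Ioi (0:ℝ), ENNReal.ofReal (t ^ (s - 1) * rexp (-((1 + ‖v‖ ^ 2) * t))) :=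
        lintegral_const_mul' _ _ (ENNReal.inv_ne_top.mpr hΓne)
    _ = (ENNReal.ofReal (Real.Gamma s))⁻¹ * ∫⁻ t in Ioi (0:ℝ),
          ∫⁻ v : F, ENNReal.ofReal (t ^ (s - 1) * rexp (-((1 + ‖v‖ ^ 2) * t))) := by
        rw [lintegral_lintegral_swap]
        apply Measurable.aemeasurable
        fun_prop
    _ = (ENNReal.ofReal (Real.Gamma s))⁻¹ * ∫⁻ t in Ioi (0:ℝ),
          ENNReal.ofReal (π ^ (m / 2)) * ENNReal.ofReal (t ^ (s - m / 2 - 1) * rexp (-t)) := by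
        congr 1
        refine setLIntegral_congr_fun measurableSet_Ioi ?_
        intro t ht
        have ht : (0:ℝ) < t := ht
        have hsplit : ∀ v : F, t ^ (s - 1) * rexp (-((1 + ‖v‖ ^ 2) * t)) =
            (t ^ (s - 1) * rexp (-t)) * rexp (-t * ‖v‖ ^ 2) := by
          intro v
          rw [show -((1 + ‖v‖ ^ 2) * t) = -t + -t * ‖v‖ ^ 2 by ring, Real.exp_add]
          ring
        simp_rw [hsplit]
        rw [show (fun v : F => ENNReal.ofReal ((t ^ (s-1) * rexp (-t)) * rexp (-t * ‖v‖ ^ 2))) =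
            fun v : F => ENNReal.ofReal (t ^ (s-1) * rexp (-t)) *
              ENNReal.ofReal (rexp (-t * ‖v‖ ^ 2)) from funext fun v => by
            rw [ENNReal.ofReal_mul (by positivity)]]
        rw [lintegral_const_mul' _ _ ENNReal.ofReal_ne_top, lintA ht, ← hm, ← ENNReal.ofReal_mul
          (by positivity), ← ENNReal.ofReal_mul (by positivity)]
        congr 1
        have h1 : (π / t) ^ (m / 2) = π ^ (m / 2) * t ^ (-(m / 2)) := by
          rw [div_eq_mul_inv, Real.mul_rpow pi_pos.le (inv_nonneg.mpr ht.le),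
            Real.inv_rpow ht.le, ← Real.rpow_neg ht.le]
        have h2 : t ^ (s - m / 2 - 1) = t ^ (s - 1) * t ^ (-(m / 2)) := by
          rw [← Real.rpow_add ht]
          ring_nf
        rw [h1, h2]
        ring
    _ = (ENNReal.ofReal (Real.Gamma s))⁻¹ *
          (ENNReal.ofReal (π ^ (m / 2)) * ENNReal.ofReal (Real.Gamma (s - m / 2))) := by
        rw [lintegral_const_mul' _ _ ENNReal.ofReal_ne_top]
        congr 1
        have := lintB (a := s - m / 2) (r := 1) hsm one_pos
        simp only [one_mul, one_div_one, Real.one_rpow] at this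
        rw [← this]
    _ = ENNReal.ofReal (π ^ (m / 2) * Real.Gamma (s - m / 2) / Real.Gamma s) := by
        rw [← ENNReal.ofReal_mul (by positivity), mul_comm, ENNReal.ofReal_div_of_pos hΓs]
        exact (div_eq_mul_inv _ _).symm

lemma lintD {s c : ℝ} (hc : 0 < c) :
    ∫⁻ v : F, ENNReal.ofReal ((c ^ 2 + ‖v‖ ^ 2) ^ (-s)) =
      ENNReal.ofReal (c ^ ((Module.finrank ℝ F : ℝ) - 2 * s)) *
        ∫⁻ v : F, ENNReal.ofReal ((1 + ‖v‖ ^ 2) ^ (-s)) := by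
  have hcne : c ≠ 0 := ne_of_gt hc
  set m := Module.finrank ℝ F with hm
  have hg : Measurable (fun v : F => ENNReal.ofReal ((c ^ 2 + ‖v‖ ^ 2) ^ (-s))) := by fun_prop
  have e1 : ∫⁻ v : F, ENNReal.ofReal ((c ^ 2 + ‖v‖ ^ 2) ^ (-s)) ∂(Measure.map (c • ·) volume)
      = ∫⁻ x : F, ENNReal.ofReal ((c ^ 2 + ‖c • x‖ ^ 2) ^ (-s)) :=
    lintegral_map hg (measurable_const_smul c)
  have e2 : ∫⁻ v : F, ENNReal.ofReal ((c ^ 2 + ‖v‖ ^ 2) ^ (-s)) ∂(Measure.map (c • ·) volume)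
      = ENNReal.ofReal (|(c ^ m)⁻¹|) *
          ∫⁻ v : F, ENNReal.ofReal ((c ^ 2 + ‖v‖ ^ 2) ^ (-s)) := by
    rw [Measure.map_addHaar_smul volume hcne, lintegral_smul_measure, smul_eq_mul]
  have e3 : ∀ x : F, ENNReal.ofReal ((c ^ 2 + ‖c • x‖ ^ 2) ^ (-s)) =
      ENNReal.ofReal (c ^ (-(2 * s))) * ENNReal.ofReal ((1 + ‖x‖ ^ 2) ^ (-s)) := by
    intro x
    have hnorm : c ^ 2 + ‖c • x‖ ^ 2 = c ^ 2 * (1 + ‖x‖ ^ 2) := by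
      rw [norm_smul]
      simp only [Real.norm_eq_abs, mul_pow, sq_abs]
      ring
    rw [hnorm, Real.mul_rpow (by positivity) (by positivity),
      ENNReal.ofReal_mul (by positivity)]
    congr 2
    rw [← Real.rpow_natCast c 2, ← Real.rpow_mul hc.le]
    norm_num
  have e4 : ENNReal.ofReal (|(c ^ m)⁻¹|) *
      ∫⁻ v : F, ENNReal.ofReal ((c ^ 2 + ‖v‖ ^ 2) ^ (-s)) =
      ENNReal.ofReal (c ^ (-(2 * s))) * ∫⁻ x : F, ENNReal.ofReal ((1 + ‖x‖ ^ 2) ^ (-s)) := by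
    rw [← e2, e1, lintegral_congr e3, lintegral_const_mul' _ _ ENNReal.ofReal_ne_top]
  calc ∫⁻ v : F, ENNReal.ofReal ((c ^ 2 + ‖v‖ ^ 2) ^ (-s))
      = (ENNReal.ofReal (c ^ m) * ENNReal.ofReal (|(c ^ m)⁻¹|)) *
          ∫⁻ v : F, ENNReal.ofReal ((c ^ 2 + ‖v‖ ^ 2) ^ (-s)) := by
        rw [abs_of_pos (by positivity), ← ENNReal.ofReal_mul (by positivity),
          mul_inv_cancel₀ (by positivity), ENNReal.ofReal_one, one_mul]
    _ = ENNReal.ofReal (c ^ m) * (ENNReal.ofReal (|(c ^ m)⁻¹|) *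
          ∫⁻ v : F, ENNReal.ofReal ((c ^ 2 + ‖v‖ ^ 2) ^ (-s))) := by rw [mul_assoc]
    _ = ENNReal.ofReal (c ^ m) * (ENNReal.ofReal (c ^ (-(2 * s))) *
          ∫⁻ x : F, ENNReal.ofReal ((1 + ‖x‖ ^ 2) ^ (-s))) := by rw [e4]
    _ = ENNReal.ofReal (c ^ ((m : ℝ) - 2 * s)) *
          ∫⁻ x : F, ENNReal.ofReal ((1 + ‖x‖ ^ 2) ^ (-s)) := by
        rw [← mul_assoc, ← ENNReal.ofReal_mul (by positivity)]
        congr 2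
        rw [← Real.rpow_natCast c m, ← Real.rpow_add hc, sub_eq_add_neg]

lemma radon_val (n : ℕ) (hn : 2 ≤ n) (θ : sphere (0 : EuclideanSpace ℝ (Fin n)) 1) (t : ℝ) :
    Radon n (fun x => ENNReal.ofReal ((1 + ‖x‖ ^ 2) ^ (-(n : ℝ) / 2))) θ t =
      ENNReal.ofReal ((1 + t ^ 2) ^ (-(1 / 2) : ℝ)) *
        ENNReal.ofReal (π ^ (((n : ℝ) - 1) / 2) * Real.Gamma (1 / 2) /
          Real.Gamma ((n : ℝ) / 2)) := by
  have hθ : ‖(θ : EuclideanSpace ℝ (Fin n))‖ = 1 := mem_sphere_zero_iff_norm.mp θ.2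
  have hθ0 : (θ : EuclideanSpace ℝ (Fin n)) ≠ 0 := by
    intro h; rw [h] at hθ; simp at hθ
  have hrank : Module.finrank ℝ ((ℝ ∙ (θ : EuclideanSpace ℝ (Fin n)))ᗮ) = n - 1 := by
    have h1 : Module.finrank ℝ (ℝ ∙ (θ : EuclideanSpace ℝ (Fin n))) = 1 :=
      finrank_span_singleton hθ0
    have h2 := Submodule.finrank_add_finrank_orthogonal
      (K := (ℝ ∙ (θ : EuclideanSpace ℝ (Fin n))))
    rw [h1, finrank_euclideanSpace_fin] at h2
    omega
  have hcast : ((n - 1 : ℕ) : ℝ) = (n : ℝ) - 1 := by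
    have : (1:ℕ) ≤ n := by omega
    push_cast [this]
    ring
  have hpos : (0:ℝ) < 1 + t ^ 2 := by positivity
  set c : ℝ := (1 + t ^ 2) ^ ((1:ℝ)/2) with hcdef
  have hc : 0 < c := Real.rpow_pos_of_pos hpos _
  have hc2 : c ^ 2 = 1 + t ^ 2 := by
    rw [hcdef, ← Real.rpow_natCast _ 2, ← Real.rpow_mul hpos.le]
    norm_num
  have hpt : ∀ y : ((ℝ ∙ (θ : EuclideanSpace ℝ (Fin n)))ᗮ),
      (1 : ℝ) + ‖t • (θ : EuclideanSpace ℝ (Fin n)) + (y : EuclideanSpace ℝ (Fin n))‖ ^ 2 =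
        c ^ 2 + ‖y‖ ^ 2 := by
    intro y
    have h0 : inner ℝ (θ : EuclideanSpace ℝ (Fin n)) (y : EuclideanSpace ℝ (Fin n)) = (0:ℝ) :=
      ((Submodule.mem_orthogonal _ _).mp y.2) _ (Submodule.mem_span_singleton_self _)
    have hinner : inner ℝ (t • (θ : EuclideanSpace ℝ (Fin n)))
        (y : EuclideanSpace ℝ (Fin n)) = (0:ℝ) := by
      rw [real_inner_smul_left, h0, mul_zero]
    rw [norm_add_sq_real, hinner, norm_smul, hθ, hc2]
    simp only [Real.norm_eq_abs, mul_one, sq_abs]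
    have : ‖(y : EuclideanSpace ℝ (Fin n))‖ = ‖y‖ := rfl
    rw [this]
    ring
  have key : Radon n (fun x => ENNReal.ofReal ((1 + ‖x‖ ^ 2) ^ (-(n : ℝ) / 2))) θ t =
      ∫⁻ y : ((ℝ ∙ (θ : EuclideanSpace ℝ (Fin n)))ᗮ),
        ENNReal.ofReal ((c ^ 2 + ‖y‖ ^ 2) ^ (-((n : ℝ) / 2))) := by
    rw [Radon]
    refine lintegral_congr fun y => ?_
    rw [hpt y, neg_div]
  rw [key, lintD hc, lintC (by rw [hrank, hcast]; push_cast; linarith), hrank, hcast]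
  congr 2
  · rw [hcdef, ← Real.rpow_mul hpos.le]
    congr 1
    push_cast
    ring
  · congr 2
    ring

lemma sphereArea_pos (m : ℕ) : 0 < sphereArea m := by
  rw [sphereArea]
  have h := Real.Gamma_pos_of_pos (show 0 < ((m:ℝ)+1)/2 by positivity)
  positivity

lemma key_identity (m : ℕ) :
    (π ^ (((((m:ℕ):ℝ)+2)-1)/2) * Real.Gamma (1/2) / Real.Gamma ((((m:ℕ):ℝ)+2)/2)) ^
        (((((m:ℕ):ℝ)+2))+1) *
      (π ^ ((1:ℝ)/2) * Real.Gamma ((((m:ℕ):ℝ)+2)/2) / Real.Gamma (((((m:ℕ):ℝ)+2)+1)/2)) =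
    (sphereArea (m+1) ^ (m+2) / (2 * sphereArea (m+2) ^ (m+1))) *
      (π ^ ((((m:ℕ):ℝ)+2)/2) * Real.Gamma (1/2) / Real.Gamma (((((m:ℕ):ℝ)+2)+1)/2)) ^
        (((m:ℕ):ℝ)+2) := by
  set u : ℝ := π ^ ((1:ℝ)/2) with hu
  have hupos : 0 < u := Real.rpow_pos_of_pos pi_pos _
  have hG12 : Real.Gamma (1/2) = u := by rw [Real.Gamma_one_half_eq, Real.sqrt_eq_rpow]
  have hgpos : 0 < Real.Gamma ((((m:ℕ):ℝ)+2)/2) :=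
    Real.Gamma_pos_of_pos (by positivity)
  have hhpos : 0 < Real.Gamma ((((((m:ℕ):ℝ)+2))+1)/2) :=
    Real.Gamma_pos_of_pos (by positivity)
  have eA : π ^ (((((m:ℕ):ℝ)+2)-1)/2) = u ^ (m+1) := by
    rw [hu, ← Real.rpow_natCast (π ^ ((1:ℝ)/2)) (m+1), ← Real.rpow_mul pi_pos.le]
    congr 1
    push_cast
    ring
  have eB : π ^ ((((m:ℕ):ℝ)+2)/2) = u ^ (m+2) := by
    rw [hu, ← Real.rpow_natCast (π ^ ((1:ℝ)/2)) (m+2), ← Real.rpow_mul pi_pos.le]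
    congr 1
    push_cast
    ring
  have eC : π ^ (((((m:ℕ):ℝ)+2)+1)/2) = u ^ (m+3) := by
    rw [hu, ← Real.rpow_natCast (π ^ ((1:ℝ)/2)) (m+3), ← Real.rpow_mul pi_pos.le]
    congr 1
    push_cast
    ring
  have eS1 : sphereArea (m+1) = 2 * u ^ (m+2) / Real.Gamma ((((m:ℕ):ℝ)+2)/2) := by
    rw [sphereArea, show (((m+1:ℕ):ℝ)+1)/2 = (((m:ℕ):ℝ)+2)/2 by push_cast; ring, eB]
  have eS2 : sphereArea (m+2) = 2 * u ^ (m+3) / Real.Gamma (((((m:ℕ):ℝ)+2)+1)/2) := by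
    rw [sphereArea, show (((m+2:ℕ):ℝ)+1)/2 = ((((m:ℕ):ℝ)+2)+1)/2 by push_cast; ring, eC]
  rw [show ((((m:ℕ):ℝ)+2))+1 = ((m+3:ℕ):ℝ) by push_cast; ring]
  rw [show (((m:ℕ):ℝ)+2) = ((m+2:ℕ):ℝ) by push_cast; ring]
  rw [Real.rpow_natCast, Real.rpow_natCast]
  rw [show ((((m+2:ℕ):ℝ))-1)/2 = ((((m:ℕ):ℝ)+2)-1)/2 by push_cast; ring]
  rw [show (((m+2:ℕ):ℝ))/2 = (((m:ℕ):ℝ)+2)/2 by push_cast; ring]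
  rw [show (((m+3:ℕ):ℝ))/2 = ((((m:ℕ):ℝ)+2)+1)/2 by push_cast; ring]
  rw [eA, eB, eS1, eS2, hG12]
  have hune : u ≠ 0 := ne_of_gt hupos
  have hgne : Real.Gamma ((((m:ℕ):ℝ)+2)/2) ≠ 0 := ne_of_gt hgpos
  have hhne : Real.Gamma (((((m:ℕ):ℝ)+2)+1)/2) ≠ 0 := ne_of_gt hhpos
  simp only [div_pow, mul_pow]
  field_simp
  ring

lemma sphMeasure_univ (n : ℕ) (hn : 2 ≤ n) : sphMeasure n Set.univ = 1 := by
  rw [sphMeasure, Measure.smul_apply, smul_eq_mul]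
  have htop : (volume : Measure (EuclideanSpace ℝ (Fin n))).toSphere Set.univ ≠ ⊤ :=
    measure_ne_top _ _
  have h0 : (volume : Measure (EuclideanSpace ℝ (Fin n))).toSphere Set.univ ≠ 0 := by
    rw [Measure.toSphere_apply_univ]
    refine mul_ne_zero ?_ ?_
    · simp only [ne_eq, Nat.cast_eq_zero]
      rw [finrank_euclideanSpace_fin]
      omega
    · exact (measure_ball_pos volume 0 one_pos).ne'
  exact ENNReal.inv_mul_cancel h0 htop

end Aux

/-- The function `f₀(x) = (1+|x|²)^{-n/2}` realizes equality in the sharp `L^{(n+1)/n} → L^{n+1}`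
estimate for the hyperplane Radon transform, both sides being finite and positive. -/
theorem stmt6 (n : ℕ) (hn : 2 ≤ n) (Ω : ℝ)
    (hΩ : Ω = (sphereArea (n - 1) ^ n / (2 * sphereArea n ^ (n - 1))) ^ (1 / ((n : ℝ) + 1)))
    (f₀ : EuclideanSpace ℝ (Fin n) → ℝ≥0∞)
    (hf₀ : f₀ = fun x => ENNReal.ofReal ((1 + ‖x‖ ^ 2) ^ (-(n : ℝ) / 2)))
    (A B : ℝ≥0∞)
    (hA : A = (∫⁻ θ, ∫⁻ t : ℝ, Radon n f₀ θ t ^ ((n : ℝ) + 1) ∂volume ∂(sphMeasure n)) ^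
      (1 / ((n : ℝ) + 1)))
    (hB : B = (∫⁻ x, f₀ x ^ (((n : ℝ) + 1) / n)) ^ ((n : ℝ) / ((n : ℝ) + 1))) :
    A = ENNReal.ofReal Ω * B ∧ 0 < A ∧ A < ⊤ ∧ 0 < B ∧ B < ⊤ := by
  obtain ⟨m, rfl⟩ : ∃ m, n = m + 2 := ⟨n - 2, by omega⟩
  rw [show m + 2 - 1 = m + 1 from by omega] at hΩ
  have hg : 0 < Real.Gamma (((m+2:ℕ):ℝ)/2) := Real.Gamma_pos_of_pos (by positivity)
  have hh : 0 < Real.Gamma ((((m+2:ℕ):ℝ)+1)/2) := Real.Gamma_pos_of_pos (by positivity)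
  have hG12 : 0 < Real.Gamma (1/2) := Real.Gamma_pos_of_pos (by norm_num)
  set k1 : ℝ := π ^ ((((m+2:ℕ):ℝ)-1)/2) * Real.Gamma (1/2) / Real.Gamma (((m+2:ℕ):ℝ)/2)
    with hk1def
  set k2 : ℝ := π ^ ((1:ℝ)/2) * Real.Gamma (((m+2:ℕ):ℝ)/2) / Real.Gamma ((((m+2:ℕ):ℝ)+1)/2)
    with hk2def
  set k3 : ℝ := π ^ (((m+2:ℕ):ℝ)/2) * Real.Gamma (1/2) / Real.Gamma ((((m+2:ℕ):ℝ)+1)/2)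
    with hk3def
  have hk1 : 0 < k1 := by rw [hk1def]; positivity
  have hk2 : 0 < k2 := by rw [hk2def]; positivity
  have hk3 : 0 < k3 := by rw [hk3def]; positivity
  set M : ℝ := ((m+2:ℕ):ℝ) with hM
  have hMpos : (0:ℝ) < M := by rw [hM]; positivity
  have hMne : M ≠ 0 := ne_of_gt hMpos
  have hM1 : (0:ℝ) < M + 1 := by linarith
  have hrad : ∀ (θ : sphere (0 : EuclideanSpace ℝ (Fin (m+2))) 1) (t : ℝ),
      Radon (m+2) f₀ θ t = ENNReal.ofReal ((1 + t ^ 2) ^ (-(1 / 2) : ℝ)) *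
        ENNReal.ofReal k1 := by
    intro θ t
    rw [hf₀]
    exact radon_val (m+2) (by omega) θ t
  have htint : ∀ θ : sphere (0 : EuclideanSpace ℝ (Fin (m+2))) 1,
      (∫⁻ t : ℝ, Radon (m+2) f₀ θ t ^ (M + 1) ∂volume) =
        ENNReal.ofReal (k1 ^ (M+1) * k2) := by
    intro θ
    have hp : (0:ℝ) ≤ M + 1 := hM1.le
    have e1 : ∀ t : ℝ, Radon (m+2) f₀ θ t ^ (M + 1) =
        ENNReal.ofReal (k1 ^ (M+1)) *
          ENNReal.ofReal ((1 + t^2) ^ (-((M+1)/2))) := by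
      intro t
      have h2 : (0:ℝ) < 1 + t^2 := by positivity
      rw [hrad θ t, ENNReal.mul_rpow_of_nonneg _ _ hp,
        ENNReal.ofReal_rpow_of_pos (Real.rpow_pos_of_pos h2 _),
        ENNReal.ofReal_rpow_of_pos hk1, mul_comm]
      congr 2
      rw [← Real.rpow_mul h2.le]
      congr 1
      ring
    have hC := lintC (F := ℝ) (s := (M+1)/2)
      (by rw [Module.finrank_self, Nat.cast_one]; linarith)
    rw [Module.finrank_self, Nat.cast_one] at hC
    calc ∫⁻ t : ℝ, Radon (m+2) f₀ θ t ^ (M + 1) ∂volume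
        = ∫⁻ t : ℝ, ENNReal.ofReal (k1 ^ (M+1)) *
            ENNReal.ofReal ((1 + t^2) ^ (-((M+1)/2))) := lintegral_congr e1
      _ = ENNReal.ofReal (k1 ^ (M+1)) *
            ∫⁻ t : ℝ, ENNReal.ofReal ((1 + ‖t‖^2) ^ (-((M+1)/2))) := by
          rw [lintegral_const_mul' _ _ ENNReal.ofReal_ne_top]
          congr 1
          refine lintegral_congr fun t => ?_
          rw [Real.norm_eq_abs, sq_abs]
      _ = ENNReal.ofReal (k1 ^ (M+1)) * ENNReal.ofReal
            (π ^ ((1:ℝ)/2) * Real.Gamma ((M+1)/2 - 1/2) / Real.Gamma ((M+1)/2)) := by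
          rw [hC]
      _ = ENNReal.ofReal (k1 ^ (M+1) * k2) := by
          rw [show (M+1)/2 - 1/2 = M/2 from by ring, ← hk2def,
            ← ENNReal.ofReal_mul (by positivity)]
  have hAval : (∫⁻ θ, ∫⁻ t : ℝ, Radon (m+2) f₀ θ t ^ (M + 1) ∂volume
      ∂(sphMeasure (m+2))) = ENNReal.ofReal (k1 ^ (M+1) * k2) := by
    rw [lintegral_congr htint, lintegral_const, sphMeasure_univ (m+2) (by omega), mul_one]
  have hBval : (∫⁻ x, f₀ x ^ ((M + 1) / M)) = ENNReal.ofReal k3 := by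
    rw [hf₀]
    have e2 : ∀ x : EuclideanSpace ℝ (Fin (m+2)),
        (ENNReal.ofReal ((1 + ‖x‖ ^ 2) ^ (-(M : ℝ) / 2))) ^ ((M + 1) / M) =
          ENNReal.ofReal ((1 + ‖x‖ ^ 2) ^ (-((M+1)/2))) := by
      intro x
      have h2 : (0:ℝ) < 1 + ‖x‖^2 := by positivity
      have hexp : -M / 2 * ((M + 1) / M) = -((M + 1) / 2) := by
        field_simp
      rw [ENNReal.ofReal_rpow_of_pos (Real.rpow_pos_of_pos h2 _), ← Real.rpow_mul h2.le, hexp]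
    rw [lintegral_congr e2]
    have hC := lintC (F := EuclideanSpace ℝ (Fin (m+2))) (s := (M+1)/2)
      (by rw [finrank_euclideanSpace_fin, ← hM]; linarith)
    rw [finrank_euclideanSpace_fin, ← hM] at hC
    rw [hC, hk3def]
    congr 2
    ring
  have hX : 0 < sphereArea (m+1) ^ (m+2) / (2 * sphereArea (m+2) ^ (m+1)) := by
    have h1 := sphereArea_pos (m+1)
    have h2 := sphereArea_pos (m+2)
    positivity
  have hΩpos : 0 < Ω := by
    rw [hΩ]
    exact Real.rpow_pos_of_pos hX _
  have KI := key_identity m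
  rw [show ((m:ℕ):ℝ) + 2 = ((m+2:ℕ):ℝ) from by push_cast; ring] at KI
  have hkey : k1 ^ (M+1) * k2 = (sphereArea (m+1) ^ (m+2) /
      (2 * sphereArea (m+2) ^ (m+1))) * k3 ^ M := by
    rw [hk1def, hk2def, hk3def, hM]
    exact KI
  have hreal : (k1 ^ (M+1) * k2) ^ (1/(M+1)) = Ω * k3 ^ (M/(M+1)) := by
    rw [hkey, Real.mul_rpow hX.le (Real.rpow_nonneg hk3.le _), ← Real.rpow_mul hk3.le,
      hΩ, mul_one_div]
  have hAfin : A = ENNReal.ofReal ((k1 ^ (M+1) * k2) ^ (1/(M+1))) := by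
    rw [hA, hAval, ENNReal.ofReal_rpow_of_pos (by positivity)]
  have hBfin : B = ENNReal.ofReal (k3 ^ (M/(M+1))) := by
    rw [hB, hBval, ENNReal.ofReal_rpow_of_pos hk3]
  refine ⟨?_, ?_, ?_, ?_, ?_⟩
  · rw [hAfin, hBfin, hreal, ENNReal.ofReal_mul hΩpos.le]
  · rw [hAfin]
    exact ENNReal.ofReal_pos.mpr (Real.rpow_pos_of_pos (by positivity) _)
  · rw [hAfin]
    exact ENNReal.ofReal_lt_top
  · rw [hBfin]
    exact ENNReal.ofReal_pos.mpr (Real.rpow_pos_of_pos hk3 _)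
  · rw [hBfin]
    exact ENNReal.ofReal_lt_top
end
end
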